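/- Let n be odd, let f₀, f₁, f₂, f₃, f₄, f₅ be monic polynomials in F₂[x] with f₅|f₄|f₃|f₂|f₁|f₀|(xⁿ−1), and let C be the cyclic code of length n over R given by the ideal of R[x]/(xⁿ−1) generated by f₀, uf₁, u²f₂, u³f₃, u⁴f₄, u⁵f₅ (coefficients embedded via F₂ ↪ R). If C is reverse-complement, then every f_i (0 ≤ i ≤ 5) is self-reciprocal. -/

import Mathlib

open Polynomial

/-- The ring `R = F₂[u]/(u⁶)`. -/
abbrev R : Type := AdjoinRoot (X ^ 6 : (ZMod 2)[X])

/-- `u ∈ R`, the image of `X`. -/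
noncomputable def u : R := AdjoinRoot.root _

/-- `α = u⁵ + u⁴ + u³ + u² + u + 1`, so that the complement of `x ∈ R` is `x + α`. -/
noncomputable def alpha : R := u ^ 5 + u ^ 4 + u ^ 3 + u ^ 2 + u + 1

/-- Reverse-complement of a vector: `(c₀, …, c_{n-1}) ↦ (ĉ_{n-1}, …, ĉ₀)` with `x̂ = x + α`. -/
noncomputable def rcomp {n : ℕ} (c : Fin n → R) : Fin n → R := fun j => c j.rev + alpha

/-- Lift a binary polynomial to a polynomial over `R` via `F₂ ↪ R`. -/
noncomputable def rmap (f : (ZMod 2)[X]) : R[X] := f.map (algebraMap (ZMod 2) R)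

/-- The quotient map `R[x] → R[x]/(xⁿ - 1)`. -/
noncomputable def mkq (n : ℕ) : R[X] →+* R[X] ⧸ Ideal.span ({(X : R[X]) ^ n - 1} : Set R[X]) :=
  Ideal.Quotient.mk _

lemma monicX6 : (X ^ 6 : (ZMod 2)[X]).Monic := monic_X_pow 6

/-- `u^k` coefficient extraction, as an `F₂`-linear map `R → F₂`. -/
noncomputable def ecoef (k : ℕ) : R →ₗ[ZMod 2] ZMod 2 :=
  (Polynomial.lcoeff (ZMod 2) k).comp (AdjoinRoot.modByMonicHom monicX6)

lemma ecoef_mk (k : ℕ) (hk : k < 6) (p : (ZMod 2)[X]) :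
    ecoef k (AdjoinRoot.mk _ p) = p.coeff k := by
  have h := Polynomial.modByMonic_add_div p (X ^ 6)
  have : (p %ₘ X ^ 6).coeff k = p.coeff k := by
    conv_rhs => rw [← h]
    rw [coeff_add]
    have : ((X:(ZMod 2)[X]) ^ 6 * (p /ₘ X ^ 6)).coeff k = 0 := by
      rw [mul_comm, Polynomial.coeff_mul_X_pow']
      simp [Nat.not_le_of_lt hk]
    rw [this, add_zero]
  simpa [ecoef, AdjoinRoot.modByMonicHom_mk] using this

lemma u_pow_six : (u : R) ^ 6 = 0 := by
  rw [u, ← AdjoinRoot.mk_X, ← map_pow, AdjoinRoot.mk_self]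

lemma u_pow_eq_zero {m : ℕ} (hm : 6 ≤ m) : (u : R) ^ m = 0 := by
  calc (u:R)^m = u^6 * u^(m-6) := by rw [← pow_add]; congr 1; omega
  _ = 0 := by rw [u_pow_six, zero_mul]

lemma ecoef_shift (k : ℕ) (hk : k ≤ 5) (x : R) :
    ecoef 5 (u ^ (5 - k) * x) = ecoef k x := by
  obtain ⟨p, rfl⟩ := AdjoinRoot.mk_surjective x
  rw [u, ← AdjoinRoot.mk_X, ← map_pow, ← map_mul, ecoef_mk 5 (by omega), ecoef_mk k (by omega)]
  rw [mul_comm, Polynomial.coeff_mul_X_pow']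
  simp [Nat.sub_sub_self hk, show 5-k ≤ 5 from by omega]

/-- Apply `ecoef k` to each coefficient of a polynomial over `R`. -/
noncomputable def Emap (k : ℕ) (q : R[X]) : (ZMod 2)[X] :=
  ⟨⟨q.toFinsupp.coeff.mapRange (ecoef k) (map_zero _)⟩⟩

lemma Emap_coeff (k : ℕ) (q : R[X]) (m : ℕ) : (Emap k q).coeff m = ecoef k (q.coeff m) := rfl

lemma ecoef_term (k : ℕ) (hk : k ≤ 5) (x : R) (c : ZMod 2) :
    ecoef 5 (u ^ (5-k) * (x * algebraMap (ZMod 2) R c)) = ecoef k x * c := by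
  have h1 : x * algebraMap (ZMod 2) R c = c • x := by
    rw [Algebra.smul_def, mul_comm]
  rw [h1, mul_smul_comm, map_smul, ecoef_shift k hk, smul_eq_mul, mul_comm]

lemma Emap_mul (k : ℕ) (hk : k ≤ 5) (q : R[X]) (g : (ZMod 2)[X]) :
    Emap 5 (Polynomial.C (u ^ (5-k)) * q * rmap g) = Emap k q * g := by
  ext m
  rw [Emap_coeff, mul_assoc, coeff_C_mul, coeff_mul, Finset.mul_sum, map_sum, coeff_mul]
  refine Finset.sum_congr rfl fun p _ => ?_
  rw [Emap_coeff, rmap, coeff_map]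
  exact ecoef_term k hk _ _

lemma Emap_one : Emap 0 (1 : R[X]) = 1 := by
  ext m
  rw [Emap_coeff]
  rcases eq_or_ne m 0 with rfl | hm
  · rw [coeff_one_zero, coeff_one_zero]
    have : (1 : R) = AdjoinRoot.mk _ (1 : (ZMod 2)[X]) := by rw [map_one]
    rw [this, ecoef_mk 0 (by omega), coeff_one_zero]
  · rw [coeff_one, coeff_one, if_neg hm, if_neg hm, map_zero]

lemma Emap_zero (k : ℕ) : Emap k (0 : R[X]) = 0 := by
  ext m; rw [Emap_coeff, coeff_zero, map_zero, coeff_zero]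

lemma Emap_add (k : ℕ) (a b : R[X]) : Emap k (a + b) = Emap k a + Emap k b := by
  ext m; rw [Emap_coeff, coeff_add, map_add, coeff_add, Emap_coeff, Emap_coeff]

lemma rmap_sub (a b : (ZMod 2)[X]) : rmap (a - b) = rmap a - rmap b := by
  simp [rmap, Polynomial.map_sub]

lemma rmap_Xn (n : ℕ) : rmap (X ^ n - 1) = (X : R[X]) ^ n - 1 := by
  simp [rmap, Polynomial.map_sub, Polynomial.map_pow, Polynomial.map_X, Polynomial.map_one]

lemma dvd_term (i j : ℕ) (hi : i ≤ 5) (hj5 : j ≤ 5) (Q : R[X]) (f fi : (ZMod 2)[X])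
    (hd : j ≤ i → fi ∣ f) :
    fi ∣ Emap 5 (Polynomial.C (u ^ (5-i)) * (Q * (Polynomial.C (u ^ j) * rmap f))) := by
  by_cases hj : j ≤ i
  · have hu : (u : R) ^ (5-i) * u ^ j = u ^ (5-(i-j)) := by rw [← pow_add]; congr 1; omega
    have e : Polynomial.C (u ^ (5-i)) * (Q * (Polynomial.C (u ^ j) * rmap f)) =
        Polynomial.C ((u:R) ^ (5-(i-j))) * Q * rmap f := by
      rw [← hu, map_mul]; ring
    rw [e, Emap_mul (i-j) (by omega)]
    exact Dvd.dvd.mul_left (hd hj) _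
  · have hz : (u : R) ^ (5-i) * u ^ j = 0 := by
      rw [← pow_add]; exact u_pow_eq_zero (by omega)
    have e : Polynomial.C (u ^ (5-i)) * (Q * (Polynomial.C (u ^ j) * rmap f)) = 0 := by
      calc Polynomial.C (u ^ (5-i)) * (Q * (Polynomial.C (u ^ j) * rmap f))
          = Polynomial.C ((u:R) ^ (5-i) * u ^ j) * (Q * rmap f) := by rw [map_mul]; ring
        _ = 0 := by rw [hz, map_zero, zero_mul]
    rw [e, Emap_zero]
    exact dvd_zero _

lemma tor_extract (n i : ℕ) (hn : n ≠ 0) (hi : i ≤ 5)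
    (f₀ f₁ f₂ f₃ f₄ f₅ h fi : (ZMod 2)[X])
    (hg : fi ∣ X ^ n - 1)
    (hd0 : 0 ≤ i → fi ∣ f₀) (hd1 : 1 ≤ i → fi ∣ f₁) (hd2 : 2 ≤ i → fi ∣ f₂)
    (hd3 : 3 ≤ i → fi ∣ f₃) (hd4 : 4 ≤ i → fi ∣ f₄) (hd5 : 5 ≤ i → fi ∣ f₅)
    (hmem : mkq n (Polynomial.C (u ^ i) * rmap h) ∈
      Ideal.span ({mkq n (rmap f₀), mkq n (Polynomial.C u * rmap f₁),
        mkq n (Polynomial.C (u ^ 2) * rmap f₂), mkq n (Polynomial.C (u ^ 3) * rmap f₃),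
        mkq n (Polynomial.C (u ^ 4) * rmap f₄), mkq n (Polynomial.C (u ^ 5) * rmap f₅)} :
          Set (R[X] ⧸ Ideal.span ({(X : R[X]) ^ n - 1} : Set R[X])))) :
    fi ∣ h := by
  rw [Ideal.mem_span_insert] at hmem
  obtain ⟨y₀, z₀, hz₀, he₀⟩ := hmem
  rw [Ideal.mem_span_insert] at hz₀
  obtain ⟨y₁, z₁, hz₁, he₁⟩ := hz₀
  rw [Ideal.mem_span_insert] at hz₁
  obtain ⟨y₂, z₂, hz₂, he₂⟩ := hz₁
  rw [Ideal.mem_span_insert] at hz₂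
  obtain ⟨y₃, z₃, hz₃, he₃⟩ := hz₂
  rw [Ideal.mem_span_insert] at hz₃
  obtain ⟨y₄, z₄, hz₄, he₄⟩ := hz₃
  rw [Ideal.mem_span_singleton'] at hz₄
  obtain ⟨y₅, he₅⟩ := hz₄
  obtain ⟨Q₀, rfl⟩ := Ideal.Quotient.mk_surjective y₀
  obtain ⟨Q₁, rfl⟩ := Ideal.Quotient.mk_surjective y₁
  obtain ⟨Q₂, rfl⟩ := Ideal.Quotient.mk_surjective y₂
  obtain ⟨Q₃, rfl⟩ := Ideal.Quotient.mk_surjective y₃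
  obtain ⟨Q₄, rfl⟩ := Ideal.Quotient.mk_surjective y₄
  obtain ⟨Q₅, rfl⟩ := Ideal.Quotient.mk_surjective y₅
  subst he₅ he₄ he₃ he₂ he₁
  -- he₀ : mkq n (C (u^i) * rmap h) = big sum of mkq-terms
  have hQ : mkq n (Polynomial.C (u ^ i) * rmap h
      - (Q₀ * rmap f₀ + Q₁ * (Polynomial.C u * rmap f₁) + Q₂ * (Polynomial.C (u ^ 2) * rmap f₂)
        + Q₃ * (Polynomial.C (u ^ 3) * rmap f₃) + Q₄ * (Polynomial.C (u ^ 4) * rmap f₄)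
        + Q₅ * (Polynomial.C (u ^ 5) * rmap f₅))) = 0 := by
    rw [map_sub]
    rw [he₀]
    simp only [mkq, map_add, map_mul]
    ring
  rw [mkq, Ideal.Quotient.eq_zero_iff_mem, Ideal.mem_span_singleton'] at hQ
  obtain ⟨W, hW⟩ := hQ
  have Eq : Polynomial.C (u ^ i) * rmap h =
      Q₀ * (Polynomial.C ((u:R) ^ 0) * rmap f₀) + Q₁ * (Polynomial.C ((u:R) ^ 1) * rmap f₁)
      + Q₂ * (Polynomial.C (u ^ 2) * rmap f₂) + Q₃ * (Polynomial.C (u ^ 3) * rmap f₃)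
      + Q₄ * (Polynomial.C (u ^ 4) * rmap f₄) + Q₅ * (Polynomial.C (u ^ 5) * rmap f₅)
      + W * (Polynomial.C ((u:R) ^ 0) * rmap (X ^ n - 1)) := by
    rw [rmap_Xn, pow_zero, map_one, one_mul, one_mul, pow_one]
    rw [hW]; ring
  have key : h = Emap 5 (Polynomial.C (u ^ (5-i)) * (Polynomial.C (u ^ i) * rmap h)) := by
    have hu : Polynomial.C ((u:R) ^ (5-i)) * (Polynomial.C ((u:R) ^ i) * rmap h) =
        Polynomial.C ((u:R) ^ (5-0)) * 1 * rmap h := by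
      rw [mul_one, ← mul_assoc, ← map_mul, ← pow_add, show 5 - i + i = 5 - 0 from by omega]
    rw [hu, Emap_mul 0 (by omega), Emap_one, one_mul]
  rw [key, Eq]
  simp only [mul_add, Emap_add]
  have d0 := dvd_term i 0 hi (by omega) Q₀ f₀ fi (fun _ => hd0 (by omega))
  have d1 := dvd_term i 1 hi (by omega) Q₁ f₁ fi hd1
  have d2 := dvd_term i 2 hi (by omega) Q₂ f₂ fi hd2
  have d3 := dvd_term i 3 hi (by omega) Q₃ f₃ fi hd3
  have d4 := dvd_term i 4 hi (by omega) Q₄ f₄ fi hd4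
  have d5 := dvd_term i 5 hi (by omega) Q₅ f₅ fi hd5
  have dW := dvd_term i 0 hi (by omega) W (X ^ n - 1) fi (fun _ => hg)
  simp only [pow_zero, pow_one] at d0 d1 dW ⊢
  exact dvd_add (dvd_add (dvd_add (dvd_add (dvd_add (dvd_add d0 d1) d2) d3) d4) d5) dW

lemma R_nontrivial : (1 : R) ≠ 0 := by
  intro h
  have := congrArg (ecoef 0) h
  rw [map_zero, show (1:R) = AdjoinRoot.mk _ (1:(ZMod 2)[X]) from (map_one _).symm,
    ecoef_mk 0 (by omega)] at this
  simp at this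

instance : Nontrivial R := nontrivial_of_ne 1 0 R_nontrivial

lemma t_pow (n : ℕ) : (mkq n X) ^ n = 1 := by
  have h : mkq n ((X : R[X]) ^ n - 1) = 0 := by
    rw [mkq, Ideal.Quotient.eq_zero_iff_mem]
    exact Ideal.subset_span rfl
  rw [map_sub, map_pow, map_one, sub_eq_zero] at h
  exact h

lemma t_mul_t (n : ℕ) (hn : n ≠ 0) : (mkq n X) * (mkq n X) ^ (n-1) = 1 := by
  calc mkq n X * (mkq n X) ^ (n-1) = (mkq n X) ^ (1 + (n-1)) := by rw [pow_add, pow_one]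
  _ = 1 := by rw [show 1 + (n-1) = n from by omega, t_pow]

noncomputable def tInv (n : ℕ) (hn : n ≠ 0) : Invertible (mkq n X) :=
  ⟨(mkq n X) ^ (n-1), by rw [mul_comm]; exact t_mul_t n hn, t_mul_t n hn⟩

lemma mkq_eq_eval₂ (n : ℕ) (p : R[X]) :
    mkq n p = eval₂ ((mkq n).comp (C : R →+* R[X])) (mkq n X) p := by
  conv_lhs => rw [show p = eval₂ C X p from (Polynomial.eval₂_C_X).symm]
  exact Polynomial.hom_eval₂ p C (mkq n) X

lemma reflect_reflect (d : ℕ) (p : R[X]) : reflect d (reflect d p) = p := by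
  ext m
  rw [coeff_reflect, coeff_reflect, revAt_invol]

lemma natDegree_reflect_le {d : ℕ} {p : R[X]} (hd : p.natDegree ≤ d) :
    (reflect d p).natDegree ≤ d := by
  rw [natDegree_le_iff_coeff_eq_zero] at hd ⊢
  intro N hN
  rw [coeff_reflect, ← revAtFun_eq, revAtFun, if_neg (by omega)]
  exact hd N hN

lemma mkq_reflect (n : ℕ) (hn : n ≠ 0) (d : ℕ) (p : R[X]) (hd : p.natDegree ≤ d) :
    mkq n (reflect d p) =
      eval₂ ((mkq n).comp (C : R →+* R[X])) ((mkq n X) ^ (n-1)) p * (mkq n X) ^ d := by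
  letI := tInv n hn
  have h := Polynomial.eval₂_reflect_mul_pow ((mkq n).comp (C : R →+* R[X])) (mkq n X) d
    (reflect d p) (natDegree_reflect_le hd)
  rw [reflect_reflect] at h
  rw [mkq_eq_eval₂ n (reflect d p)]
  exact h.symm

lemma eval₂_mod (n : ℕ) (hn : n ≠ 0) (q : R[X]) :
    eval₂ ((mkq n).comp (C : R →+* R[X])) ((mkq n X) ^ (n-1)) (q %ₘ ((X:R[X]) ^ n - 1)) =
    eval₂ ((mkq n).comp (C : R →+* R[X])) ((mkq n X) ^ (n-1)) q := by
  have hm : ((X:R[X]) ^ n - 1).Monic := by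
    simpa using monic_X_pow_sub_C (1:R) hn
  conv_rhs => rw [← Polynomial.modByMonic_add_div q ((X:R[X]) ^ n - 1)]
  have hz : (((mkq n X) ^ (n-1)) ^ n - 1 : _) = 0 := by
    rw [← pow_mul, mul_comm, pow_mul, t_pow, one_pow, sub_self]
  rw [eval₂_add, eval₂_mul, eval₂_sub, eval₂_X_pow, eval₂_one, hz, zero_mul, add_zero]

lemma coeff_zero_ne (n : ℕ) (hn : n ≠ 0) (f : (ZMod 2)[X]) (hf : f ∣ X ^ n - 1) :
    f.coeff 0 ≠ 0 := by
  obtain ⟨g, hg⟩ := hf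
  intro h
  have : ((X:(ZMod 2)[X]) ^ n - 1).coeff 0 = f.coeff 0 * g.coeff 0 := by
    rw [hg, Polynomial.mul_coeff_zero]
  rw [h, zero_mul, coeff_sub, coeff_one_zero, Polynomial.coeff_X_pow, if_neg (by omega)] at this
  simp at this

lemma reverse_eq_self (f : (ZMod 2)[X]) (hm : f.Monic) (h0 : f.coeff 0 ≠ 0)
    (hdvd : f ∣ f.reverse) : f.reverse = f := by
  have hf0 : f ≠ 0 := hm.ne_zero
  have htd : f.natTrailingDegree = 0 := by
    rw [natTrailingDegree_eq_zero]; exact Or.inr h0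
  have hdeg : f.reverse.natDegree = f.natDegree := by
    rw [reverse_natDegree, htd, Nat.sub_zero]
  have hmrev : f.reverse.Monic := by
    unfold Monic
    rw [reverse_leadingCoeff]
    have : f.trailingCoeff ≠ 0 := by
      rw [trailingCoeff, htd]; exact h0
    -- in ZMod 2, nonzero means 1
    revert this
    generalize f.trailingCoeff = a
    revert a
    decide
  obtain ⟨c, hc⟩ := hdvd
  have hcne : c ≠ 0 := by
    intro h; rw [h, mul_zero] at hc; exact hmrev.ne_zero hc
  have hdc : f.natDegree + c.natDegree = f.natDegree := by
    rw [← Polynomial.natDegree_mul hf0 hcne, ← hc, hdeg]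
  have hc0 : c.natDegree = 0 := by omega
  have hcm : c.Monic := hm.of_mul_monic_left (hc ▸ hmrev)
  rw [hc, (hcm.natDegree_eq_zero).mp hc0, mul_one]

/-- The cyclic code of length `n` over `R` given (as a set of coefficient vectors) by the
ideal of `R[x]/(xⁿ - 1)` generated by `f₀, u f₁, u² f₂, u³ f₃, u⁴ f₄, u⁵ f₅`. -/
noncomputable def cyclicCode (n : ℕ) (f₀ f₁ f₂ f₃ f₄ f₅ : (ZMod 2)[X]) :
    Set (Fin n → R) :=
  {c | mkq n (∑ i : Fin n, Polynomial.C (c i) * X ^ (i : ℕ)) ∈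
    Ideal.span ({mkq n (rmap f₀), mkq n (Polynomial.C u * rmap f₁),
      mkq n (Polynomial.C (u ^ 2) * rmap f₂), mkq n (Polynomial.C (u ^ 3) * rmap f₃),
      mkq n (Polynomial.C (u ^ 4) * rmap f₄), mkq n (Polynomial.C (u ^ 5) * rmap f₅)} :
        Set (R[X] ⧸ Ideal.span ({(X : R[X]) ^ n - 1} : Set R[X])))}

lemma rev_gen (n : ℕ) (hn : n ≠ 0)
    (I : Ideal (R[X] ⧸ Ideal.span ({(X : R[X]) ^ n - 1} : Set R[X])))
    (a : R) (f : (ZMod 2)[X])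
    (hg : mkq n (Polynomial.C a * rmap f) ∈ I)
    (hrev : ∀ q : R[X], mkq n q ∈ I →
      eval₂ ((mkq n).comp (C : R →+* R[X])) ((mkq n X) ^ (n-1)) q ∈ I) :
    mkq n (Polynomial.C a * rmap f.reverse) ∈ I := by
  have h1 := hrev _ hg
  rw [eval₂_mul, eval₂_C] at h1
  have hrefl : rmap f.reverse = reflect f.natDegree (rmap f) := by
    rw [Polynomial.reverse, rmap, rmap, Polynomial.reflect_map]
  have e : mkq n (Polynomial.C a * rmap f.reverse) =
      (((mkq n).comp (C : R →+* R[X])) a *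
        eval₂ ((mkq n).comp (C : R →+* R[X])) ((mkq n X) ^ (n-1)) (rmap f)) *
        (mkq n X) ^ f.natDegree := by
    rw [map_mul, hrefl, mkq_reflect n hn f.natDegree (rmap f) natDegree_map_le]
    rw [mul_assoc]
    rfl
  rw [e]
  exact Ideal.mul_mem_right _ _ h1

/-- for `n` odd and monic `f₅|f₄|f₃|f₂|f₁|f₀|(xⁿ-1)` in `F₂[x]`, if the cyclic
code `⟨f₀, uf₁, u²f₂, u³f₃, u⁴f₄, u⁵f₅⟩` is reverse-complement, then every `fᵢ` is
self-reciprocal. -/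
theorem selfReciprocal_of_reverseComplement (n : ℕ) (hodd : Odd n)
    (f₀ f₁ f₂ f₃ f₄ f₅ : (ZMod 2)[X])
    (hm₀ : f₀.Monic) (hm₁ : f₁.Monic) (hm₂ : f₂.Monic) (hm₃ : f₃.Monic)
    (hm₄ : f₄.Monic) (hm₅ : f₅.Monic)
    (h54 : f₅ ∣ f₄) (h43 : f₄ ∣ f₃) (h32 : f₃ ∣ f₂) (h21 : f₂ ∣ f₁) (h10 : f₁ ∣ f₀)
    (h0 : f₀ ∣ X ^ n - 1)
    (hrc : ∀ c ∈ cyclicCode n f₀ f₁ f₂ f₃ f₄ f₅, rcomp c ∈ cyclicCode n f₀ f₁ f₂ f₃ f₄ f₅) :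
    f₀.reverse = f₀ ∧ f₁.reverse = f₁ ∧ f₂.reverse = f₂ ∧ f₃.reverse = f₃ ∧
      f₄.reverse = f₄ ∧ f₅.reverse = f₅ := by
  have hn : n ≠ 0 := by rcases hodd with ⟨k, hk⟩; omega
  have hmXn : ((X : R[X]) ^ n - 1).Monic := by simpa using monic_X_pow_sub_C (1 : R) hn
  -- divisibility chain into f₀ and X^n - 1
  have d10 : f₁ ∣ f₀ := h10
  have d20 : f₂ ∣ f₀ := h21.trans h10
  have d30 : f₃ ∣ f₀ := h32.trans d20
  have d40 : f₄ ∣ f₀ := h43.trans d30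
  have d50 : f₅ ∣ f₀ := h54.trans d40
  have g0 : f₀ ∣ X ^ n - 1 := h0
  have g1 : f₁ ∣ X ^ n - 1 := d10.trans h0
  have g2 : f₂ ∣ X ^ n - 1 := d20.trans h0
  have g3 : f₃ ∣ X ^ n - 1 := d30.trans h0
  have g4 : f₄ ∣ X ^ n - 1 := d40.trans h0
  have g5 : f₅ ∣ X ^ n - 1 := d50.trans h0
  have hmemC : ∀ c : Fin n → R, c ∈ cyclicCode n f₀ f₁ f₂ f₃ f₄ f₅ ↔
      mkq n (∑ i : Fin n, Polynomial.C (c i) * X ^ (i : ℕ)) ∈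
      Ideal.span ({mkq n (rmap f₀), mkq n (Polynomial.C u * rmap f₁),
        mkq n (Polynomial.C (u ^ 2) * rmap f₂), mkq n (Polynomial.C (u ^ 3) * rmap f₃),
        mkq n (Polynomial.C (u ^ 4) * rmap f₄), mkq n (Polynomial.C (u ^ 5) * rmap f₅)} :
          Set (R[X] ⧸ Ideal.span ({(X : R[X]) ^ n - 1} : Set R[X]))) := fun c => Iff.rfl
  set I := Ideal.span ({mkq n (rmap f₀), mkq n (Polynomial.C u * rmap f₁),
      mkq n (Polynomial.C (u ^ 2) * rmap f₂), mkq n (Polynomial.C (u ^ 3) * rmap f₃),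
      mkq n (Polynomial.C (u ^ 4) * rmap f₄), mkq n (Polynomial.C (u ^ 5) * rmap f₅)} :
        Set (R[X] ⧸ Ideal.span ({(X : R[X]) ^ n - 1} : Set R[X]))) with hI
  have sum_eq : ∀ r : R[X], r.natDegree < n →
      (∑ i : Fin n, Polynomial.C (r.coeff (i : ℕ)) * X ^ (i : ℕ)) = r := by
    intro r hr
    conv_rhs => rw [Polynomial.as_sum_range' r n hr]
    rw [← Fin.sum_univ_eq_sum_range (fun k => (Polynomial.monomial k) (r.coeff k)) n]
    exact Finset.sum_congr rfl fun k _ => C_mul_X_pow_eq_monomial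
  have hzero : (fun _ : Fin n => (0 : R)) ∈ cyclicCode n f₀ f₁ f₂ f₃ f₄ f₅ := by
    rw [hmemC]
    simp only [map_zero, zero_mul, Finset.sum_const_zero]
    exact Ideal.zero_mem _
  have halpha : mkq n (∑ i : Fin n, Polynomial.C alpha * X ^ (i : ℕ)) ∈ I := by
    have h := hrc _ hzero
    rw [hmemC] at h
    simpa [rcomp] using h
  -- closure of I under the reciprocal map
  have revmem : ∀ q : R[X], mkq n q ∈ I →
      eval₂ ((mkq n).comp (C : R →+* R[X])) ((mkq n X) ^ (n-1)) q ∈ I := by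
    intro q hq
    have hrd : (q %ₘ ((X : R[X]) ^ n - 1)).natDegree < n := by
      by_cases h : q %ₘ ((X : R[X]) ^ n - 1) = 0
      · rw [h, Polynomial.natDegree_zero]; omega
      · rw [Polynomial.natDegree_lt_iff_degree_lt h]
        have hlt := Polynomial.degree_modByMonic_lt q hmXn
        have hdeg : ((X : R[X]) ^ n - 1).degree = n := by
          simpa using degree_X_pow_sub_C (Nat.pos_of_ne_zero hn) (1 : R)
        rwa [hdeg] at hlt
    set r := q %ₘ ((X : R[X]) ^ n - 1) with hrdef
    have hrq : mkq n r = mkq n q := by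
      rw [hrdef, Polynomial.modByMonic_eq_sub_mul_div q ((X : R[X]) ^ n - 1), map_sub, map_mul]
      have hz : mkq n ((X : R[X]) ^ n - 1) = 0 := by
        rw [mkq, Ideal.Quotient.eq_zero_iff_mem]; exact Ideal.subset_span rfl
      rw [hz, zero_mul, sub_zero]
    have hc : (fun i : Fin n => r.coeff (i : ℕ)) ∈ cyclicCode n f₀ f₁ f₂ f₃ f₄ f₅ := by
      rw [hmemC, sum_eq r hrd, hrq]
      exact hq
    have h1 := hrc _ hc
    rw [hmemC] at h1
    simp only [rcomp] at h1
    have hsplit : (∑ i : Fin n,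
        Polynomial.C ((fun j : Fin n => r.coeff (j : ℕ)) i.rev + alpha) * X ^ (i : ℕ))
        = (∑ i : Fin n, Polynomial.C (r.coeff ((i.rev : Fin n) : ℕ)) * X ^ (i : ℕ))
          + ∑ i : Fin n, Polynomial.C alpha * X ^ (i : ℕ) := by
      rw [← Finset.sum_add_distrib]
      exact Finset.sum_congr rfl fun i _ => by rw [map_add, add_mul]
    rw [hsplit, map_add] at h1
    have h2 : mkq n (∑ i : Fin n, Polynomial.C (r.coeff ((i.rev : Fin n) : ℕ)) * X ^ (i : ℕ))
        ∈ I := by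
      have h3 := Ideal.sub_mem _ h1 halpha
      simpa using h3
    have hrefl : (∑ i : Fin n, Polynomial.C (r.coeff ((i.rev : Fin n) : ℕ)) * X ^ (i : ℕ))
        = reflect (n-1) r := by
      ext m
      rw [coeff_reflect, Polynomial.finset_sum_coeff]
      simp only [coeff_C_mul, coeff_X_pow, mul_ite, mul_one, mul_zero]
      by_cases hm : m < n
      · rw [Finset.sum_eq_single (⟨m, hm⟩ : Fin n)]
        · rw [if_pos rfl, revAt_le (by omega : m ≤ n - 1)]
          congr 1
          simp only [Fin.val_rev]
          omega
        · intro b _ hb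
          rw [if_neg]
          intro hmb
          exact hb (by exact Fin.ext hmb.symm)
        · intro hmem
          exact absurd (Finset.mem_univ _) hmem
      · rw [Finset.sum_eq_zero, ← revAtFun_eq, revAtFun, if_neg (by omega),
          coeff_eq_zero_of_natDegree_lt (by omega)]
        intro b _
        rw [if_neg]
        have := b.isLt
        omega
    rw [hrefl, mkq_reflect n hn (n-1) r (by omega)] at h2
    have h4 := Ideal.mul_mem_right (mkq n X) _ h2
    rw [mul_assoc, mul_comm ((mkq n X) ^ (n-1)) (mkq n X), t_mul_t n hn, mul_one] at h4
    rw [hrdef, eval₂_mod n hn q] at h4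
    exact h4
  -- generators of I and their reciprocals
  have gmem0 : mkq n (Polynomial.C ((u:R) ^ 0) * rmap f₀) ∈ I := by
    rw [pow_zero, map_one, one_mul]
    exact Ideal.subset_span (Set.mem_insert _ _)
  have gmem1 : mkq n (Polynomial.C ((u:R) ^ 1) * rmap f₁) ∈ I := by
    rw [pow_one]
    exact Ideal.subset_span (Set.mem_insert_of_mem _ (Set.mem_insert _ _))
  have gmem2 : mkq n (Polynomial.C ((u:R) ^ 2) * rmap f₂) ∈ I :=
    Ideal.subset_span (Set.mem_insert_of_mem _ (Set.mem_insert_of_mem _ (Set.mem_insert _ _)))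
  have gmem3 : mkq n (Polynomial.C ((u:R) ^ 3) * rmap f₃) ∈ I :=
    Ideal.subset_span (Set.mem_insert_of_mem _ (Set.mem_insert_of_mem _
      (Set.mem_insert_of_mem _ (Set.mem_insert _ _))))
  have gmem4 : mkq n (Polynomial.C ((u:R) ^ 4) * rmap f₄) ∈ I :=
    Ideal.subset_span (Set.mem_insert_of_mem _ (Set.mem_insert_of_mem _
      (Set.mem_insert_of_mem _ (Set.mem_insert_of_mem _ (Set.mem_insert _ _)))))
  have gmem5 : mkq n (Polynomial.C ((u:R) ^ 5) * rmap f₅) ∈ I :=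
    Ideal.subset_span (Set.mem_insert_of_mem _ (Set.mem_insert_of_mem _
      (Set.mem_insert_of_mem _ (Set.mem_insert_of_mem _
        (Set.mem_insert_of_mem _ (Set.mem_singleton _))))))
  have grev0 := rev_gen n hn I ((u:R) ^ 0) f₀ gmem0 revmem
  have grev1 := rev_gen n hn I ((u:R) ^ 1) f₁ gmem1 revmem
  have grev2 := rev_gen n hn I ((u:R) ^ 2) f₂ gmem2 revmem
  have grev3 := rev_gen n hn I ((u:R) ^ 3) f₃ gmem3 revmem
  have grev4 := rev_gen n hn I ((u:R) ^ 4) f₄ gmem4 revmem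
  have grev5 := rev_gen n hn I ((u:R) ^ 5) f₅ gmem5 revmem
  rw [hI] at grev0 grev1 grev2 grev3 grev4 grev5
  have hdvd0 : f₀ ∣ f₀.reverse :=
    tor_extract n 0 hn (by omega) f₀ f₁ f₂ f₃ f₄ f₅ f₀.reverse f₀ g0
      (fun _ => dvd_rfl) (fun h => absurd h (by omega)) (fun h => absurd h (by omega))
      (fun h => absurd h (by omega)) (fun h => absurd h (by omega))
      (fun h => absurd h (by omega)) grev0
  have hdvd1 : f₁ ∣ f₁.reverse :=
    tor_extract n 1 hn (by omega) f₀ f₁ f₂ f₃ f₄ f₅ f₁.reverse f₁ g1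
      (fun _ => d10) (fun _ => dvd_rfl) (fun h => absurd h (by omega))
      (fun h => absurd h (by omega)) (fun h => absurd h (by omega))
      (fun h => absurd h (by omega)) grev1
  have hdvd2 : f₂ ∣ f₂.reverse :=
    tor_extract n 2 hn (by omega) f₀ f₁ f₂ f₃ f₄ f₅ f₂.reverse f₂ g2
      (fun _ => d20) (fun _ => h21) (fun _ => dvd_rfl)
      (fun h => absurd h (by omega)) (fun h => absurd h (by omega))
      (fun h => absurd h (by omega)) grev2
  have hdvd3 : f₃ ∣ f₃.reverse :=
    tor_extract n 3 hn (by omega) f₀ f₁ f₂ f₃ f₄ f₅ f₃.reverse f₃ g3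
      (fun _ => d30) (fun _ => h32.trans h21) (fun _ => h32) (fun _ => dvd_rfl)
      (fun h => absurd h (by omega)) (fun h => absurd h (by omega)) grev3
  have hdvd4 : f₄ ∣ f₄.reverse :=
    tor_extract n 4 hn (by omega) f₀ f₁ f₂ f₃ f₄ f₅ f₄.reverse f₄ g4
      (fun _ => d40) (fun _ => (h43.trans h32).trans h21) (fun _ => h43.trans h32)
      (fun _ => h43) (fun _ => dvd_rfl) (fun h => absurd h (by omega)) grev4
  have hdvd5 : f₅ ∣ f₅.reverse :=
    tor_extract n 5 hn (by omega) f₀ f₁ f₂ f₃ f₄ f₅ f₅.reverse f₅ g5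
      (fun _ => d50) (fun _ => ((h54.trans h43).trans h32).trans h21)
      (fun _ => (h54.trans h43).trans h32) (fun _ => h54.trans h43)
      (fun _ => h54) (fun _ => dvd_rfl) grev5
  exact ⟨reverse_eq_self f₀ hm₀ (coeff_zero_ne n hn f₀ g0) hdvd0,
    reverse_eq_self f₁ hm₁ (coeff_zero_ne n hn f₁ g1) hdvd1,
    reverse_eq_self f₂ hm₂ (coeff_zero_ne n hn f₂ g2) hdvd2,
    reverse_eq_self f₃ hm₃ (coeff_zero_ne n hn f₃ g3) hdvd3,
    reverse_eq_self f₄ hm₄ (coeff_zero_ne n hn f₄ g4) hdvd4,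
    reverse_eq_self f₅ hm₅ (coeff_zero_ne n hn f₅ g5) hdvd5⟩
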